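/- All zeros of the orthogonal polynomials Φ_n generated by the Szegő recursion with |α_k| < 1 lie strictly inside the open unit disc. -/

import Mathlib

open Polynomial

/-- The reversed polynomial P*(z) = z^{deg P} conj(P(1/conj z)). -/
noncomputable def szegoStar (P : Polynomial ℂ) : Polynomial ℂ :=
  (P.map (starRingEnd ℂ)).reverse

lemma szegoStar_natDegree_le (P : Polynomial ℂ) : (szegoStar P).natDegree ≤ P.natDegree :=
  le_trans (Polynomial.reverse_natDegree_le _) (le_of_eq (Polynomial.natDegree_map _))

lemma szegoStar_eval (P : Polynomial ℂ) {z : ℂ} (hz : z ≠ 0) :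
    (szegoStar P).eval z
      = z ^ P.natDegree * (starRingEnd ℂ) (P.eval (((starRingEnd ℂ) z)⁻¹)) := by
  have : Invertible z⁻¹ := invertibleOfNonzero (inv_ne_zero hz)
  have h := Polynomial.eval₂_reverse_mul_pow (RingHom.id ℂ) z⁻¹ (P.map (starRingEnd ℂ))
  rw [show (⅟(z⁻¹) : ℂ) = z from invOf_eq_right_inv (by field_simp)] at h
  have hQ : (P.map (starRingEnd ℂ)).natDegree = P.natDegree := Polynomial.natDegree_map _
  have h2 : (P.map (starRingEnd ℂ)).eval z⁻¹
      = (starRingEnd ℂ) (P.eval (((starRingEnd ℂ) z)⁻¹)) := by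
    have : z⁻¹ = (starRingEnd ℂ) (((starRingEnd ℂ) z)⁻¹) := by
      simp [map_inv₀]
    rw [this, Polynomial.eval_map, Polynomial.eval₂_at_apply]
  replace h : (P.map (starRingEnd ℂ)).reverse.eval z * z⁻¹ ^ P.natDegree
      = (P.map (starRingEnd ℂ)).eval z⁻¹ := by rw [hQ] at h; exact h
  rw [szegoStar]
  rw [← h2, ← h]
  field_simp
  rw [mul_assoc, ← mul_pow, mul_one_div_cancel hz, one_pow, mul_one]

lemma szego_monic (α : ℕ → ℂ) (Φ : ℕ → Polynomial ℂ) (h0 : Φ 0 = 1)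
    (hrec : ∀ n, Φ (n + 1) = X * Φ n - C (starRingEnd ℂ (α n)) * szegoStar (Φ n)) :
    ∀ n, (Φ n).Monic ∧ (Φ n).natDegree = n := by
  intro n
  induction n with
  | zero => simp [h0, Polynomial.monic_one]
  | succ n ih =>
    obtain ⟨hm, hd⟩ := ih
    have hXm : (X * Φ n).Monic := Polynomial.monic_X.mul hm
    have hdX : (X * Φ n).natDegree = n + 1 := by
      rw [Polynomial.natDegree_mul Polynomial.X_ne_zero hm.ne_zero,
        Polynomial.natDegree_X, hd, add_comm]
    have hlt : (C ((starRingEnd ℂ) (α n)) * szegoStar (Φ n)).natDegree < (X * Φ n).natDegree := by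
      rw [hdX]
      exact lt_of_le_of_lt (le_trans (Polynomial.natDegree_C_mul_le _ _)
        (le_trans (szegoStar_natDegree_le _) (le_of_eq hd))) (Nat.lt_succ_self n)
    constructor
    · rw [hrec n, sub_eq_add_neg]
      refine hXm.add_of_left ?_
      rw [Polynomial.degree_neg]
      exact Polynomial.degree_lt_degree hlt
    · rw [hrec n, Polynomial.natDegree_sub_eq_left_of_natDegree_lt hlt, hdX]

lemma szego_key (α : ℕ → ℂ) (hα : ∀ n, ‖α n‖ < 1)
    (Φ : ℕ → Polynomial ℂ) (h0 : Φ 0 = 1)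
    (hrec : ∀ n, Φ (n + 1) = X * Φ n - C (starRingEnd ℂ (α n)) * szegoStar (Φ n)) :
    ∀ n, ∀ z : ℂ, 1 ≤ ‖z‖ →
      ‖(szegoStar (Φ n)).eval z‖ ≤ ‖(Φ n).eval z‖ ∧ (Φ n).eval z ≠ 0 := by
  intro n
  induction n with
  | zero =>
    intro z _
    rw [h0]
    unfold szegoStar
    rw [Polynomial.map_one, show (1 : Polynomial ℂ) = Polynomial.C 1 from Polynomial.C_1.symm,
      Polynomial.reverse_C]
    simp
  | succ n ih =>
    intro z hz
    have hz0 : z ≠ 0 := by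
      intro h; rw [h] at hz; simp at hz; linarith
    obtain ⟨hle, hne⟩ := ih z hz
    set f := (Φ n).eval z with hf
    set g := (szegoStar (Φ n)).eval z with hg
    set a := α n with ha
    -- the evaluated recursion for Φ
    have hf' : (Φ (n + 1)).eval z = z * f - (starRingEnd ℂ) a * g := by
      rw [hrec n]; simp [hf, hg]; exact Or.inl rfl
    -- the evaluated dual recursion for szegoStar Φ
    set w : ℂ := (((starRingEnd ℂ) z)⁻¹) with hw
    have hcw : (starRingEnd ℂ) w = z⁻¹ := by simp [hw, map_inv₀]
    have hw0 : w ≠ 0 := by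
      simp [hw, inv_ne_zero, hz0]
    have hcwinv : ((starRingEnd ℂ) w)⁻¹ = z := by rw [hcw, inv_inv]
    have hdn := (szego_monic α Φ h0 hrec n).2
    have hdn1 := (szego_monic α Φ h0 hrec (n + 1)).2
    have hSw : (szegoStar (Φ n)).eval w = w ^ n * (starRingEnd ℂ) f := by
      rw [szegoStar_eval (Φ n) hw0, hdn, hcwinv, hf]
    have hgz : g = z ^ n * (starRingEnd ℂ) ((Φ n).eval w) := by
      rw [hg, szegoStar_eval (Φ n) hz0, hdn, hw]
    have hg' : (szegoStar (Φ (n + 1))).eval z = g - a * z * f := by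
      rw [szegoStar_eval (Φ (n + 1)) hz0, hdn1, ← hw]
      have hev : (Φ (n + 1)).eval w = w * (Φ n).eval w - (starRingEnd ℂ) a * (w ^ n * (starRingEnd ℂ) f) := by
        rw [hrec n]; simp [hSw]; exact Or.inl rfl
      rw [hev, hgz]
      simp only [map_sub, map_mul, map_pow, RingHom.map_pow, Complex.conj_conj, hcw]
      field_simp
      have hzn : z ^ n * z⁻¹ ^ n = 1 := by rw [← mul_pow, mul_inv_cancel₀ hz0, one_pow]
      linear_combination (-(z ^ 2 * a * f)) * hzn
    -- the fundamental normSq identity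
    set f' := (Φ (n + 1)).eval z with hfp
    set g' := (szegoStar (Φ (n + 1))).eval z with hgp
    have key : Complex.normSq f' =
        Complex.normSq g' + (1 - Complex.normSq a) * (Complex.normSq (z * f) - Complex.normSq g) := by
      rw [hf', hg']
      simp only [Complex.normSq_apply, Complex.mul_re, Complex.mul_im, Complex.sub_re,
        Complex.sub_im, Complex.conj_re, Complex.conj_im]
      ring
    have hnsa : Complex.normSq a < 1 := by
      have h1 : Complex.normSq a = ‖a‖ ^ 2 := by
        rw [Complex.normSq_eq_norm_sq]
      nlinarith [hα n, norm_nonneg a]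
    have hzf : Complex.normSq g ≤ Complex.normSq (z * f) := by
      have h1 : ‖g‖ ≤ ‖z * f‖ := by
        rw [norm_mul]
        calc ‖g‖ ≤ ‖f‖ := hle
          _ = 1 * ‖f‖ := (one_mul _).symm
          _ ≤ ‖z‖ * ‖f‖ := by
              apply mul_le_mul_of_nonneg_right hz (norm_nonneg f)
      calc Complex.normSq g = ‖g‖ ^ 2 := by rw [Complex.normSq_eq_norm_sq]
        _ ≤ ‖z * f‖ ^ 2 := by
            apply pow_le_pow_left₀ (norm_nonneg g) h1
        _ = Complex.normSq (z * f) := by rw [Complex.normSq_eq_norm_sq]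
    have hprod : 0 ≤ (1 - Complex.normSq a) * (Complex.normSq (z * f) - Complex.normSq g) := by
      apply mul_nonneg (by linarith) (by linarith)
    constructor
    · -- norm inequality
      have h2 : Complex.normSq g' ≤ Complex.normSq f' := by linarith [key, hprod]
      rw [Complex.norm_def, Complex.norm_def]
      exact Real.sqrt_le_sqrt h2
    · -- nonvanishing
      intro hzero
      rw [hzero] at hf' key
      simp only [map_zero] at key
      have hg'0 : Complex.normSq g' = 0 := by
        have := Complex.normSq_nonneg g'
        linarith
      have hg'z : g' = 0 := Complex.normSq_eq_zero.mp hg'0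
      rw [hg'z] at hg'
      -- z * f = conj a * g and g = a * z * f
      have h3 : z * f = (starRingEnd ℂ) a * g := by
        linear_combination -hf'
      have h4 : g = a * (z * f) := by
        linear_combination -hg'
      have h5 : g = a * ((starRingEnd ℂ) a * g) := by rw [← h3]; exact h4
      have h6 : (1 - (Complex.normSq a : ℂ)) * g = 0 := by
        have hcc : (a * (starRingEnd ℂ) a : ℂ) = (Complex.normSq a : ℂ) := Complex.mul_conj a
        linear_combination h5 + hcc * g
      have hne1 : (1 - (Complex.normSq a : ℂ)) ≠ 0 := by
        intro h
        have : (Complex.normSq a : ℂ) = 1 := by linear_combination -h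
        have : Complex.normSq a = 1 := by exact_mod_cast this
        linarith
      have hgz0 : g = 0 := by
        rcases mul_eq_zero.mp h6 with h | h
        · exact absurd h hne1
        · exact h
      rw [hgz0, mul_zero] at h3
      exact hne (by
        rcases mul_eq_zero.mp h3 with h | h
        · exact absurd h hz0
        · exact h)

/-- All zeros of Szegő recursion polynomials lie in the open unit disc. -/
theorem szego_zeros_in_disc (α : ℕ → ℂ) (hα : ∀ n, ‖α n‖ < 1)
    (Φ : ℕ → Polynomial ℂ) (h0 : Φ 0 = 1)
    (hrec : ∀ n, Φ (n + 1) = X * Φ n - C (starRingEnd ℂ (α n)) * szegoStar (Φ n)) :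
    ∀ n, ∀ z : ℂ, (Φ n).eval z = 0 → ‖z‖ < 1 := by
  intro n z hz
  by_contra h
  push_neg at h
  exact (szego_key α hα Φ h0 hrec n z h).2 hz
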